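/- Let b be an integer with b > −2 and b ≢ 2 (mod 4), let p be an odd prime with p > b + 2, and let r ≥ 1 be an integer with gcd(p^{2r} − 1, b + 2) = 1. Let s = ∏_{ℓ} (ℓ − 1), the product running over the distinct prime divisors ℓ of b + 2. Then for every integer i ≥ 0 and every prime ℓ, it is not the case that ℓ divides 2(b + 2) and ℓ² divides p^{2(r + i·s)} + b + 1. -/

import Mathlib

/-- arithmetic core of Proposition 7 of the paper. Let `b > −2` with
`b ≢ 2 (mod 4)`, let `p` be an odd prime with `p > b + 2`, and let `r ≥ 1` satisfy
`gcd(p^{2r} − 1, b + 2) = 1`. Let `s = ∏ (ℓ − 1)` over the distinct prime divisors `ℓ` of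
`b + 2`. Then for every `i ≥ 0` and every prime `ℓ`, it is not the case that
`ℓ ∣ 2(b + 2)` and `ℓ² ∣ p^{2(r + i·s)} + b + 1`. -/
theorem stmt_11 (b : ℤ) (hb : -2 < b) (hb4 : b % 4 ≠ 2) (p : ℕ) (hp : p.Prime)
    (hodd : Odd p) (hpb : b + 2 < (p : ℤ)) (r : ℕ) (hr : 1 ≤ r)
    (hgcd : Int.gcd ((p : ℤ) ^ (2 * r) - 1) (b + 2) = 1)
    (s : ℕ) (hs : s = ∏ ℓ ∈ (b + 2).natAbs.primeFactors, (ℓ - 1)) :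
    ∀ i : ℕ, ∀ ℓ : ℕ, ℓ.Prime →
      ¬ ((ℓ : ℤ) ∣ 2 * (b + 2) ∧ (ℓ : ℤ) ^ 2 ∣ (p : ℤ) ^ (2 * (r + i * s)) + b + 1) := by
  intro i ℓ hℓ ⟨h1, h2⟩
  set k : ℕ := r + i * s with hk
  rcases eq_or_ne ℓ 2 with rfl | hne
  · -- ℓ = 2 : show 4 ∣ b + 2, contradicting b % 4 ≠ 2
    have h2 : (4:ℤ) ∣ (p:ℤ) ^ (2*k) + b + 1 := by
      have : ((2:ℕ):ℤ)^2 = 4 := by norm_num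
      rwa [this] at h2
    -- p^2 ≡ 1 mod 4
    obtain ⟨m, hm⟩ := hodd
    have hp2 : (4:ℤ) ∣ (p:ℤ)^2 - 1 := ⟨m^2 + m, by push_cast [hm]; ring⟩
    have hpk : (4:ℤ) ∣ (p:ℤ)^(2*k) - 1 := by
      have : ((p:ℤ)^2 - 1) ∣ ((p:ℤ)^2)^k - 1^k := sub_dvd_pow_sub_pow _ _ _
      rw [one_pow, ← pow_mul] at this
      exact hp2.trans this
    have : (4:ℤ) ∣ b + 2 := by
      have := dvd_sub h2 hpk
      have h : (p:ℤ) ^ (2*k) + b + 1 - ((p:ℤ)^(2*k) - 1) = b + 2 := by ring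
      rwa [h] at this
    obtain ⟨c, hc⟩ := this
    omega
  · -- ℓ odd prime dividing b + 2
    have hℓ2 : (ℓ:ℤ) ∣ b + 2 := by
      rcases (Int.Prime.dvd_mul' (by exact_mod_cast hℓ) h1) with h | h
      · exfalso
        have hle := Int.le_of_dvd (by norm_num) h
        have := hℓ.two_le
        exact hne (by omega)
      · exact h
    have hbpos : (0:ℤ) < b + 2 := by omega
    have hℓlt : (ℓ:ℤ) < (p:ℤ) := lt_of_le_of_lt (Int.le_of_dvd hbpos hℓ2) hpb
    have hℓp : ℓ ≠ p := by intro h; rw [h] at hℓlt; exact lt_irrefl _ hℓlt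
    haveI : Fact ℓ.Prime := ⟨hℓ⟩
    -- ℓ - 1 ∣ s
    have hmem : ℓ ∈ (b + 2).natAbs.primeFactors := by
      rw [Nat.mem_primeFactors]
      refine ⟨hℓ, ?_, ?_⟩
      · simpa using Int.natAbs_dvd_natAbs.mpr hℓ2
      · simp [Int.natAbs_eq_zero]; omega
    have hds : (ℓ - 1) ∣ s := hs ▸ Finset.dvd_prod_of_mem _ hmem
    -- work in ZMod ℓ
    have hpne : (p : ZMod ℓ) ≠ 0 := by
      rw [Ne, ZMod.natCast_eq_zero_iff]
      intro h
      exact hℓp ((Nat.prime_dvd_prime_iff_eq hℓ hp).mp h)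
    have hps : (p : ZMod ℓ) ^ s = 1 := by
      obtain ⟨c, hc⟩ := hds
      rw [hc, pow_mul, ZMod.pow_card_sub_one_eq_one hpne, one_pow]
    have hb0 : (b : ZMod ℓ) = -2 := by
      have : ((b + 2 : ℤ) : ZMod ℓ) = 0 := by
        rw [ZMod.intCast_zmod_eq_zero_iff_dvd]; exact_mod_cast hℓ2
      push_cast at this
      linear_combination this
    have h2' : (ℓ:ℤ) ∣ (p : ℤ) ^ (2*k) + b + 1 :=
      dvd_trans (dvd_pow_self _ two_ne_zero) h2
    have hzero : ((((p : ℤ) ^ (2*k) + b + 1 : ℤ)) : ZMod ℓ) = 0 := by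
      rw [ZMod.intCast_zmod_eq_zero_iff_dvd]; exact_mod_cast h2'
    push_cast at hzero
    have hpk1 : (p : ZMod ℓ) ^ (2*k) = 1 := by
      have : (p : ZMod ℓ) ^ (2*k) + (-2) + 1 = 0 := by rw [← hb0]; linear_combination hzero
      linear_combination this
    have hpr1 : (p : ZMod ℓ) ^ (2*r) = 1 := by
      have : (p : ZMod ℓ) ^ (2*k) = (p : ZMod ℓ)^(2*r) * ((p : ZMod ℓ)^s)^(2*i) := by
        rw [← pow_mul, ← pow_add, hk]; ring_nf
      rw [hps, one_pow, mul_one] at this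
      rw [← this, hpk1]
    have hdvd1 : (ℓ:ℤ) ∣ (p:ℤ)^(2*r) - 1 := by
      have : (((p:ℤ)^(2*r) - 1 : ℤ) : ZMod ℓ) = 0 := by push_cast; rw [hpr1]; ring
      rwa [ZMod.intCast_zmod_eq_zero_iff_dvd] at this
    have : (ℓ:ℤ) ∣ (Int.gcd ((p : ℤ) ^ (2 * r) - 1) (b + 2) : ℤ) :=
      Int.dvd_coe_gcd hdvd1 hℓ2
    rw [hgcd] at this
    have := Int.le_of_dvd (by norm_num) this
    have := hℓ.two_le
    omega
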